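/- arXiv:2005.08955 — 2 statements merged into one kernel-verified Lean document; each statement's English description precedes it below -/
import Mathlib

section
/- Let R be a commutative unitary ring with Erdős-Burgess constant I(S_R) = n finite. Then R has at most n − 1 maximal ideals of index greater than two. Equivalently: if M_1,...,M_n are n distinct maximal ideals of R each with |R/M_i| > 2 finite, then there exist elements a_1,...,a_n of R forming an idempotent-product free sequence, contradicting I(S_R) = n. -/
/-- Product of the nonempty list `a :: l` in a semigroup. -/
def sprod {α : Type*} [Mul α] (a : α) (l : List α) : α := l.foldl (· * ·) a

/-- A list is idempotent-product free if no nonempty sublist has idempotent product. -/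
def IdemProdFree {α : Type*} [Mul α] (l : List α) : Prop :=
  ∀ (a : α) (t : List α), (a :: t).Sublist l → ¬ IsIdempotentElem (sprod a t)

/-- The Erdős–Burgess constant of a (commutative) semigroup, as an extended natural:
the supremum of `|T| + 1` over all idempotent-product free sequences `T`. -/
noncomputable def EB (α : Type*) [Mul α] : ℕ∞ :=
  ⨆ l ∈ {l : List α | IdemProdFree l}, ((l.length : ℕ∞) + 1)

lemma sprod_eq_prod {α : Type*} [Monoid α] (a : α) (t : List α) :
    sprod a t = (a :: t).prod := by
  rw [List.prod_eq_foldl, List.foldl_cons, one_mul]; rfl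

lemma exists_ne_zero_ne_one {K : Type*} [MonoidWithZero K] [Finite K]
    (h : 2 < Nat.card K) : ∃ x : K, x ≠ 0 ∧ x ≠ 1 := by
  classical
  have : Fintype K := Fintype.ofFinite K
  by_contra hc
  push_neg at hc
  have hsub : (Finset.univ : Finset K) ⊆ {0, 1} := by
    intro x _
    rcases eq_or_ne x 0 with h0 | h0
    · simp [h0]
    · simp [hc x h0]
  have := Finset.card_le_card hsub
  have h2 : ({0, 1} : Finset K).card ≤ 2 := Finset.card_insert_le _ _ |>.trans (by simp)
  rw [Nat.card_eq_fintype_card] at h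
  have := Finset.card_univ (α := K) ▸ this
  omega

theorem stmt_11 (R : Type*) [CommRing R] (n : ℕ) (h : EB R = (n : ℕ∞))
    (M : Fin n → Ideal R) (hinj : Function.Injective M)
    (hmax : ∀ i, (M i).IsMaximal)
    (hfin : ∀ i, Finite (R ⧸ M i))
    (hcard : ∀ i, 2 < Nat.card (R ⧸ M i)) : False := by
  classical
  -- choose non-idempotent units b i in each quotient field
  have hb : ∀ i : Fin n, ∃ b : R ⧸ M i, b ≠ 0 ∧ b ≠ 1 := fun i => by
    have := hfin i
    haveI := hmax i
    letI := Ideal.Quotient.field (M i)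
    exact exists_ne_zero_ne_one (hcard i)
  choose b hb0 hb1 using hb
  -- CRT
  have hcop : Pairwise fun i j => IsCoprime (M i) (M j) := fun i j hij =>
    (Ideal.isCoprime_iff_sup_eq).mpr
      (Ideal.IsMaximal.coprime_of_ne (hmax i) (hmax j) (fun hEq => hij (hinj hEq)))
  have ha : ∀ i : Fin n, ∃ a : R, Ideal.Quotient.mk (M i) a = b i ∧
      ∀ j : Fin n, j ≠ i → Ideal.Quotient.mk (M j) a = 1 := by
    intro i
    obtain ⟨r, hr⟩ := Ideal.pi_quotient_surjective hcop
      (fun j => if h : j = i then h.symm ▸ b i else 1)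
    refine ⟨r, ?_, fun j hj => ?_⟩
    · simpa using hr i
    · simpa [hj] using hr j
  choose a ha1 ha2 using ha
  -- a is injective
  have hainj : Function.Injective a := by
    intro i j hij
    by_contra hne
    have h1 : Ideal.Quotient.mk (M i) (a i) = b i := ha1 i
    have h2 : Ideal.Quotient.mk (M i) (a j) = 1 :=
      ha2 j i hne
    rw [hij, h2] at h1
    exact hb1 i h1.symm
  -- the list is idempotent-product free
  have hfree : IdemProdFree (List.ofFn a) := by
    intro x t hsub hidem
    -- x is in the range of a
    have hx : x ∈ List.ofFn a := hsub.subset List.mem_cons_self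
    rw [List.mem_ofFn] at hx
    obtain ⟨i, hi⟩ := hx
    -- the sublist has no duplicates
    have hnd : (x :: t).Nodup := hsub.nodup (List.nodup_ofFn.mpr hainj)
    -- every element of t maps to 1 under mk (M i)
    have ht1 : ∀ y ∈ t, Ideal.Quotient.mk (M i) y = 1 := by
      intro y hy
      have hyl : y ∈ List.ofFn a := hsub.subset (List.mem_cons_of_mem _ hy)
      rw [List.mem_ofFn] at hyl
      obtain ⟨j, hj⟩ := hyl
      have hji : j ≠ i := by
        intro hji
        subst hji
        exact (List.nodup_cons.mp hnd).1 (by rwa [← hj, hi] at hy)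
      rw [← hj]
      exact ha2 j i (Ne.symm hji)
    -- compute the image of the product
    have hmap : Ideal.Quotient.mk (M i) (sprod x t) = b i := by
      rw [sprod_eq_prod, map_list_prod, List.map_cons, List.prod_cons]
      have : (t.map (Ideal.Quotient.mk (M i))).prod = 1 :=
        List.prod_eq_one (by simpa using ht1)
      rw [this, mul_one, ← hi]
      exact ha1 i
    -- b i is not idempotent in the field
    have hidem' : IsIdempotentElem (Ideal.Quotient.mk (M i) (sprod x t)) := by
      unfold IsIdempotentElem at hidem ⊢
      rw [← map_mul, hidem]
    rw [hmap] at hidem'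
    letI := Ideal.Quotient.field (M i)
    rcases IsIdempotentElem.iff_eq_zero_or_one.mp hidem' with h0 | h1
    · exact hb0 i h0
    · exact hb1 i h1
  -- conclude: EB R ≥ n + 1 > n
  have hle : ((List.ofFn a).length : ℕ∞) + 1 ≤ EB R := by
    exact le_iSup₂ (f := fun l (_ : IdemProdFree l) => ((l.length : ℕ∞) + 1)) (List.ofFn a) hfree
  rw [List.length_ofFn, h] at hle
  have : (n : ℕ∞) + 1 ≤ (n : ℕ∞) := hle
  have : ((n + 1 : ℕ) : ℕ∞) ≤ (n : ℕ∞) := by push_cast; exact this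
  exact absurd (Nat.cast_le.mp this) (by omega)
end

section
/- Let R be a commutative semi-local unitary ring (finitely many maximal ideals). Then the Erdős-Burgess constant of the multiplicative semigroup of R is finite if and only if R is finite. -/
open Function

lemma sprod_cons {α : Type*} [Mul α] (a b : α) (t : List α) :
    sprod a (b :: t) = sprod (a * b) t := rfl

lemma sprod_eq_mul_prod {M : Type*} [Monoid M] (a : M) (l : List M) :
    sprod a l = a * l.prod := by
  induction l generalizing a with
  | nil => simp [sprod]
  | cons b t ih => rw [sprod_cons, ih, List.prod_cons, mul_assoc]

/-- Set of products of nonempty sublists. -/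
def prodSet {α : Type*} [Mul α] (l : List α) : Set α :=
  {x | ∃ a t, (a :: t).Sublist l ∧ sprod a t = x}

lemma prodSet_finite {M : Type*} [Monoid M] (l : List M) : (prodSet l).Finite := by
  apply Set.Finite.subset ((l.sublists.finite_toSet).image (fun s => sprod 1 s))
  rintro x ⟨a, t, ht, rfl⟩
  refine ⟨a :: t, ?_, ?_⟩
  · simpa using List.mem_sublists.mpr ht
  · show sprod 1 (a :: t) = sprod a t
    rw [sprod_eq_mul_prod, sprod_eq_mul_prod, List.prod_cons, one_mul]

lemma exists_idem_pow {M : Type*} [Monoid M] [Finite M] (x : M) :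
    ∃ k, 0 < k ∧ IsIdempotentElem (x ^ k) := by
  obtain ⟨i, j, hij, h⟩ := Finite.exists_ne_map_eq_of_infinite (fun n : ℕ => x ^ (n + 1))
  wlog hlt : i < j generalizing i j
  · exact this j i hij.symm h.symm (by omega)
  set a := i + 1 with ha
  set p := j - i with hp
  have hp1 : 1 ≤ p := by omega
  have key : x ^ (a + p) = x ^ a := by
    have : j + 1 = a + p := by omega
    rw [← this]; exact h.symm
  have base : ∀ r, x ^ (a + r + p) = x ^ (a + r) := by
    intro r
    have e1 : a + r + p = (a + p) + r := by omega
    have e2 : a + r = a + r := rfl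
    rw [e1, pow_add, key, ← pow_add]
  have step : ∀ k r, x ^ (a + r + k * p) = x ^ (a + r) := by
    intro k
    induction k with
    | zero => simp
    | succ k ih =>
      intro r
      have e : a + r + (k + 1) * p = (a + (r + k * p)) + p := by ring
      rw [e, base (r + k * p)]
      have e2 : a + (r + k * p) = a + r + k * p := by omega
      rw [e2, ih r]
  refine ⟨a * p, by positivity, ?_⟩
  unfold IsIdempotentElem
  rw [← pow_add]
  have e3 : a * p + a * p = a + (a * p - a) + a * p := by
    have : a ≤ a * p := Nat.le_mul_of_pos_right a (by omega)
    omega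
  have e4 : a + (a * p - a) = a * p := by
    have : a ≤ a * p := Nat.le_mul_of_pos_right a (by omega)
    omega
  rw [e3, step a (a * p - a), e4]

lemma prodSet_subset_cons {α : Type*} [Mul α] (x : α) (l : List α) :
    prodSet l ⊆ prodSet (x :: l) := by
  rintro y ⟨a, t, ht, rfl⟩
  exact ⟨a, t, ht.trans (List.sublist_cons_self x l), rfl⟩

lemma IdemProdFree.tail {α : Type*} [Mul α] {x : α} {l : List α}
    (h : IdemProdFree (x :: l)) : IdemProdFree l :=
  fun a t ht => h a t (ht.trans (List.sublist_cons_self x l))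

lemma free_not_subset {M : Type*} [Monoid M] [Finite M] {x : M} {l : List M}
    (h : IdemProdFree (x :: l)) : ¬ (prodSet (x :: l) ⊆ prodSet l) := by
  intro hsub
  have hx : x ∈ prodSet (x :: l) :=
    ⟨x, [], List.cons_sublist_cons.mpr (List.nil_sublist l), rfl⟩
  have hpow : ∀ k, x ^ (k + 1) ∈ prodSet l := by
    intro k
    induction k with
    | zero => simpa [pow_one] using hsub hx
    | succ k ih =>
      obtain ⟨a, t, ht, he⟩ := ih
      apply hsub
      refine ⟨x, a :: t, List.cons_sublist_cons.mpr ht, ?_⟩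
      rw [sprod_eq_mul_prod, List.prod_cons, ← sprod_eq_mul_prod, he, ← pow_succ']
  obtain ⟨k, hk, hidem⟩ := exists_idem_pow x
  obtain ⟨a, t, ht, he⟩ := hpow (k - 1)
  have hk1 : k - 1 + 1 = k := by omega
  rw [hk1] at he
  exact h a t (ht.trans (List.sublist_cons_self x l)) (by rw [he]; exact hidem)

lemma free_length_le {M : Type*} [Monoid M] [Finite M] :
    ∀ l : List M, IdemProdFree l → l.length ≤ (prodSet l).ncard := by
  intro l
  induction l with
  | nil => simp
  | cons x l ih =>
    intro h
    have h1 := ih h.tail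
    have hss : prodSet l ⊂ prodSet (x :: l) := by
      refine HasSubset.Subset.ssubset_of_ne (prodSet_subset_cons x l) ?_
      intro he
      exact free_not_subset h (he ▸ subset_rfl)
    have hlt : (prodSet l).ncard < (prodSet (x :: l)).ncard :=
      Set.ncard_lt_ncard hss (Set.toFinite _)
    calc (x :: l).length = l.length + 1 := rfl
      _ ≤ (prodSet l).ncard + 1 := by omega
      _ ≤ (prodSet (x :: l)).ncard := by omega

lemma eb_ne_top_of_finite (R : Type*) [Monoid R] [Finite R] : EB R ≠ ⊤ := by
  have hb : EB R ≤ (Nat.card R : ℕ∞) + 1 := by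
    refine iSup₂_le fun l hl => ?_
    have h1 := free_length_le l hl
    have h2 : (prodSet l).ncard ≤ Nat.card R := by
      have := Set.ncard_le_ncard (Set.subset_univ (prodSet l)) Set.finite_univ
      rwa [Set.ncard_univ] at this
    have h3 : l.length ≤ Nat.card R := h1.trans h2
    exact (by gcongr)
  intro htop
  rw [htop] at hb
  have : ((Nat.card R : ℕ∞) + 1) ≠ ⊤ :=
    WithTop.add_ne_top.mpr ⟨WithTop.natCast_ne_top _, WithTop.one_ne_top⟩
  exact this (top_le_iff.mp hb)

/-- Greedy construction: in a commutative monoid with infinitely many units, for each `n`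
there is a list of length `n` all of whose nonempty sublist products are units `≠ 1`. -/
lemma greedy {A : Type*} [CommMonoid A] (hA : Infinite Aˣ) (n : ℕ) :
    ∃ l : List A, l.length = n ∧
      ∀ a t, (a :: t).Sublist l → IsUnit (sprod a t) ∧ sprod a t ≠ 1 := by
  induction n with
  | zero =>
    refine ⟨[], rfl, fun a t ht => ?_⟩
    simp at ht
  | succ n ih =>
    obtain ⟨l, hlen, hl⟩ := ih
    set F : Set A := insert 1 (prodSet l) with hF
    have hFfin : F.Finite := (prodSet_finite l).insert 1
    have hpre : {u : Aˣ | ((u⁻¹ : Aˣ) : A) ∈ F}.Finite := by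
      have hinj : Function.Injective (fun u : Aˣ => ((u⁻¹ : Aˣ) : A)) := by
        intro u v h
        have := Units.ext h
        simpa using congrArg (·⁻¹) this
      exact Set.Finite.preimage hinj.injOn hFfin
    haveI := hA
    obtain ⟨u, hu⟩ := (hpre.infinite_compl).nonempty
    simp only [Set.mem_compl_iff, Set.mem_setOf_eq] at hu
    refine ⟨(u : A) :: l, by simp [hlen], ?_⟩
    intro a t ht
    rcases List.sublist_cons_iff.mp ht with hcase | ⟨r, hr, hrl⟩
    · exact hl a t hcase
    · have ha : a = (u : A) := by injection hr
      have htr : t = r := by injection hr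
      subst ha; subst htr
      cases t with
      | nil =>
        constructor
        · exact u.isUnit
        · intro h1
          apply hu
          have h1' : (u : A) = 1 := h1
          have : u = 1 := Units.ext (h1'.trans Units.val_one.symm)
          rw [this]
          simp [hF]
      | cons b r' =>
        have hbr : (b :: r').Sublist l := hrl
        obtain ⟨hunit, hne⟩ := hl b r' hbr
        have hsp : sprod (u : A) (b :: r') = (u : A) * sprod b r' := by
          rw [sprod_eq_mul_prod, sprod_eq_mul_prod, List.prod_cons]
        constructor
        · rw [hsp]; exact u.isUnit.mul hunit
        · rw [hsp]
          intro h1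
          apply hu
          have : ((u⁻¹ : Aˣ) : A) = sprod b r' := by
            calc ((u⁻¹ : Aˣ) : A) = ((u⁻¹ : Aˣ) : A) * ((u : A) * sprod b r') := by
                  rw [h1, mul_one]
              _ = sprod b r' := by
                  rw [← mul_assoc]
                  simp
          rw [this, hF]
          exact Set.mem_insert_of_mem _ ⟨b, r', hbr, rfl⟩

/-- Lifting the greedy construction along a surjective monoid hom with infinite unit group
in the target gives arbitrarily long idempotent-product free lists. -/
lemma free_of_hom {R A : Type*} [Monoid R] [CommMonoid A] (f : R →* A)
    (hf : Function.Surjective f) (hA : Infinite Aˣ) (n : ℕ) :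
    ∃ l : List R, l.length = n ∧ IdemProdFree l := by
  obtain ⟨lA, hlen, hlA⟩ := greedy hA n
  let g := surjInv hf
  refine ⟨lA.map g, by simp [hlen], ?_⟩
  intro a t ht hidem
  have hmap := ht.map f
  have hcomp : f ∘ g = id := funext (surjInv_eq hf)
  rw [List.map_map, hcomp, List.map_id] at hmap
  simp only [List.map_cons] at hmap
  obtain ⟨hu, hne⟩ := hlA (f a) (t.map f) hmap
  have hsp : sprod (f a) (t.map f) = f (sprod a t) := by
    rw [sprod_eq_mul_prod, sprod_eq_mul_prod, map_mul]
    congr 1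
    exact List.prod_hom t f
  rw [hsp] at hu hne
  apply hne
  have hI : IsIdempotentElem (f (sprod a t)) := by
    unfold IsIdempotentElem at hidem ⊢
    rw [← map_mul, hidem]
  exact hu.mul_left_cancel (by rw [mul_one]; exact hI)

lemma eb_eq_top {R : Type*} [CommRing R] (hsl : {M : Ideal R | M.IsMaximal}.Finite)
    (hinf : Infinite R) : EB R = ⊤ := by
  classical
  set S := {M : Ideal R | M.IsMaximal} with hS
  set Jset : Set R := {x | ∀ M ∈ S, x ∈ M} with hJdef
  have hfree : ∀ n : ℕ, ∃ l : List R, l.length = n ∧ IdemProdFree l := by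
    by_cases hJ : Jset.Infinite
    · -- infinitely many units 1 + j
      have hunit : ∀ x ∈ Jset, IsUnit (1 + x) := by
        intro x hx
        by_contra hcon
        obtain ⟨M, hM, hmem⟩ := exists_max_ideal_of_mem_nonunits (mem_nonunits_iff.mpr hcon)
        have hxM : x ∈ M := hx M hM
        have h1 : (1 : R) ∈ M := by
          have := M.sub_mem hmem hxM
          simpa using this
        exact hM.ne_top ((Ideal.eq_top_iff_one M).mpr h1)
      haveI : Infinite Rˣ := by
        haveI := hJ.to_subtype
        apply Infinite.of_injective (fun x : Jset => (hunit x.1 x.2).unit)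
        intro x y h
        have hval := congrArg Units.val h
        simp only [IsUnit.unit_spec] at hval
        exact Subtype.ext (add_left_cancel hval)
      exact fun n => free_of_hom (MonoidHom.id R) surjective_id ‹Infinite Rˣ› n
    · have hJfin : Jset.Finite := Set.not_infinite.mp hJ
      have hex : ∃ M : Ideal R, M.IsMaximal ∧ Infinite (R ⧸ M) := by
        by_contra hc
        push_neg at hc
        haveI : ∀ M : ↥S, Finite (R ⧸ (M.1 : Ideal R)) := fun M =>
          hc M.1 M.2
        haveI : Finite ↥S := hsl
        let Φ : R →+* ∀ M : ↥S, R ⧸ (M.1 : Ideal R) :=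
          Pi.ringHom fun M => Ideal.Quotient.mk M.1
        obtain ⟨y, hy⟩ := Finite.exists_infinite_fiber Φ
        haveI := hy
        obtain ⟨⟨x0, hx0⟩⟩ : Nonempty ↥(Φ ⁻¹' {y}) := inferInstance
        have hmem : ∀ z : ↥(Φ ⁻¹' {y}), (z.1 - x0) ∈ Jset := by
          intro z M hMS
          have hz : Φ z.1 = Φ x0 := by
            have h1 : Φ z.1 = y := Set.mem_singleton_iff.mp z.2
            have h2 : Φ x0 = y := Set.mem_singleton_iff.mp hx0
            rw [h1, h2]
          have hcomp := congrFun hz (⟨M, hMS⟩ : ↥S)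
          exact (Ideal.Quotient.eq).mp hcomp
        apply hJ
        rw [← Set.infinite_coe_iff]
        refine Infinite.of_injective
          (fun z : ↥(Φ ⁻¹' {y}) => (⟨z.1 - x0, hmem z⟩ : ↥Jset)) ?_
        intro z w h
        apply Subtype.ext
        have hv := congrArg Subtype.val h
        exact sub_left_inj.mp hv
      obtain ⟨M, hM, hq⟩ := hex
      haveI := hM
      haveI := hq
      letI : Field (R ⧸ M) := Ideal.Quotient.field M
      haveI : Infinite (R ⧸ M)ˣ := by
        have hne : ({a : R ⧸ M | a ≠ 0}).Infinite := by
          have : ({a : R ⧸ M | a ≠ 0}) = Set.univ \ {0} := by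
            ext a; simp
          rw [this]
          exact Set.infinite_univ.diff (Set.finite_singleton 0)
        haveI : Infinite {a : R ⧸ M // a ≠ 0} := hne.to_subtype
        exact Infinite.of_injective (unitsEquivNeZero (G₀ := R ⧸ M)).symm
          (unitsEquivNeZero (G₀ := R ⧸ M)).symm.injective
      exact fun n => free_of_hom (Ideal.Quotient.mk M).toMonoidHom
        Ideal.Quotient.mk_surjective ‹Infinite (R ⧸ M)ˣ› n
  by_contra htop
  obtain ⟨m, hm⟩ := WithTop.ne_top_iff_exists.mp htop
  obtain ⟨l, hlen, hl⟩ := hfree m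
  have hle : ((l.length : ℕ∞) + 1) ≤ EB R :=
    le_iSup₂ (f := fun (l : List R) (_ : l ∈ {l : List R | IdemProdFree l}) =>
      ((l.length : ℕ∞) + 1)) l hl
  rw [hlen, ← hm] at hle
  have h2 : ((m + 1 : ℕ) : ℕ∞) ≤ (m : ℕ∞) := by push_cast; exact hle
  exact absurd (Nat.cast_le.mp h2) (by omega)

theorem stmt_18 (R : Type*) [CommRing R] (hsl : {M : Ideal R | M.IsMaximal}.Finite) :
    EB R ≠ ⊤ ↔ Finite R := by
  constructor
  · intro h
    by_contra hfin
    rw [not_finite_iff_infinite] at hfin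
    exact h (eb_eq_top hsl hfin)
  · intro h
    exact eb_ne_top_of_finite R
end
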